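/- Let V be a finite set with |V| = d, let 2 ≤ k ≤ d − 1, and let T be a k-order cherry tree on V (so T has at least two clusters). Then the separators of T form a (k − 1)-order cherry tree if and only if every cluster of T is connected to its neighbors by at most two different separators, i.e., for every node i of T the set { C_i ∩ C_j : j adjacent to i in T } has at most two elements. -/

import Mathlib

/-- A junction tree on a vertex set `V`: a finite tree `G` with nodes labeled by
clusters (finite subsets of `V`), such that no cluster is contained in the cluster
of another node and the running intersection property holds.  (The covering
condition "the clusters cover `V`" is stated separately as `JTree.CoversAll`,
so that junction trees on subsets of `V`, such as the tree formed by the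
separators, can be treated uniformly.) -/
structure JTree (V : Type) [DecidableEq V] where
  ι : Type
  [fin : Fintype ι]
  [deq : DecidableEq ι]
  G : SimpleGraph ι
  isTree : G.IsTree
  C : ι → Finset V
  noSub : ∀ i j : ι, i ≠ j → ¬ C i ⊆ C j
  rip : ∀ (i j : ι) (p : G.Walk i j), p.IsPath → ∀ x ∈ p.support, C i ∩ C j ⊆ C x

attribute [instance] JTree.fin JTree.deq

namespace JTree

variable {V : Type} [DecidableEq V]

/-- The clusters cover all of `V`: the junction tree is a junction tree "on `V`". -/
def CoversAll (T : JTree V) : Prop := ∀ v : V, ∃ i, v ∈ T.C i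

/-- `T` is a `k`-order cherry tree: every cluster has exactly `k` elements and
every edge-separator has exactly `k - 1` elements. -/
def IsCherry (T : JTree V) (k : ℕ) : Prop :=
  (∀ i, (T.C i).card = k) ∧ ∀ i j, T.G.Adj i j → (T.C i ∩ T.C j).card = k - 1

/-- The set of (distinct) separators of `T`. -/
def separators (T : JTree V) : Set (Finset V) :=
  { s | ∃ i j, T.G.Adj i j ∧ s = T.C i ∩ T.C j }

/-- The separators of `T` form a `(k-1)`-order cherry tree: there is a junction
tree whose set of clusters is exactly the set of distinct separators of `T`, in
which every cluster has `k - 1` elements and every edge-separator has `k - 2`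
elements. -/
def SeparatorsFormCherry (T : JTree V) (k : ℕ) : Prop :=
  ∃ T' : JTree V, T'.IsCherry (k - 1) ∧ Set.range T'.C = T.separators

/-- Every cluster of `T'` is the union of two clusters that are adjacent in `T`. -/
def Succ (T T' : JTree V) : Prop :=
  ∀ i' : T'.ι, ∃ i j : T.ι, T.G.Adj i j ∧ T'.C i' = T.C i ∪ T.C j

/-- `T` is a truncated R-vine at level `k`: there exists a cherry-vine sequence
`T₂, …, T_k` on `V` (with `T_m` an `m`-order cherry tree on `V` and each cluster of
`T_{m+1}` the union of two adjacent clusters of `T_m`) whose top tree `T_k` is `T`. -/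
def IsTruncatedRVine (T : JTree V) (k : ℕ) : Prop :=
  ∃ Ts : ℕ → JTree V,
    (∀ m, 2 ≤ m → m ≤ k → (Ts m).CoversAll ∧ (Ts m).IsCherry m) ∧
    (∀ m, 2 ≤ m → m < k → Succ (Ts m) (Ts (m + 1))) ∧
    Ts k = T

/-- The separator attached to an edge of the tree, as a function on `Sym2`. -/
noncomputable def sep (T : JTree V) : Sym2 T.ι → Finset V :=
  Sym2.lift ⟨fun i j => T.C i ∩ T.C j, fun _ _ => Finset.inter_comm _ _⟩

/-- The (finite) set of edges of the tree underlying `T`. -/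
noncomputable def edgeFinset (T : JTree V) : Finset (Sym2 T.ι) :=
  Set.Finite.toFinset (Set.toFinite T.G.edgeSet)

end JTree
-- Auxiliary lemmas for sep_cherry_iff_at_most_two_separators

section TreeAux

open SimpleGraph

/-- In an acyclic graph every closed trail is nil. -/
lemma closed_trail_eq_nil {α : Type*} [DecidableEq α] {G : SimpleGraph α} (hG : G.IsAcyclic) :
    ∀ {u : α} (w : G.Walk u u), w.IsTrail → w = SimpleGraph.Walk.nil := by
  intro u w hw
  cases w with
  | nil => rfl
  | cons h p =>
    exfalso
    rw [Walk.isTrail_cons] at hw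
    refine hG (Walk.cons h p.bypass) ⟨⟨?_, by simp⟩, ?_⟩
    · exact (Walk.isTrail_cons _ _).2 ⟨p.bypass_isPath.isTrail,
        fun hm => hw.2 (p.edges_bypass_subset hm)⟩
    · simpa [Walk.support_cons] using p.bypass_isPath.support_nodup

/-- The canonical path between two vertices of a tree. -/
noncomputable def tpath {α : Type*} {G : SimpleGraph α} (hG : G.IsTree) (u v : α) : G.Walk u v :=
  (hG.existsUnique_path u v).exists.choose

lemma tpath_isPath {α : Type*} {G : SimpleGraph α} (hG : G.IsTree) (u v : α) :
    (tpath hG u v).IsPath :=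
  (hG.existsUnique_path u v).exists.choose_spec

lemma eq_tpath {α : Type*} {G : SimpleGraph α} (hG : G.IsTree) {u v : α} {p : G.Walk u v}
    (hp : p.IsPath) : p = tpath hG u v :=
  (hG.existsUnique_path u v).unique hp (tpath_isPath hG u v)

end TreeAux

section FinsetAux

variable {V : Type} [DecidableEq V]

lemma exists_erase_eq_of_card {s t : Finset V} (hsub : s ⊆ t) (hcard : t.card = s.card + 1) :
    ∃ x ∈ t, s = t.erase x := by
  have h1 : (t \ s).card = 1 := by rw [Finset.card_sdiff_of_subset hsub]; omega
  obtain ⟨x, hx⟩ := Finset.card_eq_one.1 h1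
  have hxts : x ∈ t \ s := hx ▸ Finset.mem_singleton_self x
  have hxt : x ∈ t := (Finset.mem_sdiff.1 hxts).1
  have hxs : x ∉ s := (Finset.mem_sdiff.1 hxts).2
  refine ⟨x, hxt, Finset.Subset.antisymm ?_ ?_⟩
  · intro a ha
    exact Finset.mem_erase.2 ⟨fun h => hxs (h ▸ ha), hsub ha⟩
  · intro a ha
    obtain ⟨hax, hat⟩ := Finset.mem_erase.1 ha
    by_contra has
    have : a ∈ t \ s := Finset.mem_sdiff.2 ⟨hat, has⟩
    rw [hx] at this
    exact hax (Finset.mem_singleton.1 this)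

lemma erase_inter_union_erase {D : Finset V} {z x y : V} (hxy : x ≠ y) :
    (D.erase z ∩ D.erase x) ∪ (D.erase z ∩ D.erase y) = D.erase z := by
  ext t
  simp only [Finset.mem_union, Finset.mem_inter, Finset.mem_erase]
  constructor
  · rintro (⟨h, _⟩ | ⟨h, _⟩) <;> exact h
  · intro h
    rcases eq_or_ne t x with rfl | htx
    · exact Or.inr ⟨h, hxy, h.2⟩
    · exact Or.inl ⟨h, htx, h.2⟩

end FinsetAux
section ForwardAux

open SimpleGraph

variable {V : Type} [DecidableEq V]

lemma jtree_C_inj (T' : JTree V) {u w : T'.ι} (h : T'.C u = T'.C w) : u = w := by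
  by_contra hne
  exact T'.noSub u w hne (le_of_eq h)

lemma adj_of_sep3 (T' : JTree V) {k : ℕ}
    (hcard : ∀ i, (T'.C i).card = k - 1)
    {D : Finset V} {a b c : T'.ι} {x1 x2 x3 : V}
    (hx2 : x2 ∈ D) (hx3 : x3 ∈ D)
    (h12 : x1 ≠ x2) (h13 : x1 ≠ x3) (h23 : x2 ≠ x3)
    (ha : T'.C a = D.erase x1) (hb : T'.C b = D.erase x2) (hc : T'.C c = D.erase x3) :
    T'.G.Adj c b := by
  have hcb : c ≠ b := by
    rintro rfl
    have h2 : D.erase x2 = D.erase x3 := hb.symm.trans hc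
    have h1 : x3 ∈ D.erase x2 := Finset.mem_erase.2 ⟨h23.symm, hx3⟩
    rw [h2] at h1
    exact (Finset.mem_erase.1 h1).1 rfl
  let pca := tpath T'.isTree c a
  let pcb := tpath T'.isTree c b
  let pab := tpath T'.isTree a b
  have common : ∀ w, w ∈ pca.support → w ∈ pcb.support → w = c := by
    intro w hw1 hw2
    have r1 : T'.C c ∩ T'.C a ⊆ T'.C w := T'.rip c a pca (tpath_isPath _ _ _) w hw1
    have r2 : T'.C c ∩ T'.C b ⊆ T'.C w := T'.rip c b pcb (tpath_isPath _ _ _) w hw2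
    rw [hc, ha] at r1
    rw [hc, hb] at r2
    have hsub : D.erase x3 ⊆ T'.C w := by
      rw [← erase_inter_union_erase h12]
      exact Finset.union_subset r1 r2
    have heq : D.erase x3 = T'.C w :=
      Finset.eq_of_subset_of_card_le hsub (by rw [hcard w, ← hc, hcard c])
    exact (jtree_C_inj T' (hc.trans heq)).symm
  have hnotnil : ¬ pcb.Nil := Walk.not_nil_of_ne hcb
  obtain ⟨v, hadj, q, hq⟩ := Walk.not_nil_iff.1 hnotnil
  have hv_mem : v ∈ pcb.support := by
    rw [hq, Walk.support_cons]
    exact List.mem_cons_of_mem _ q.start_mem_support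
  have hvc : v ≠ c := hadj.ne'
  have hv_nca : v ∉ pca.support := fun hmem => hvc (common v hmem hv_mem)
  have heqb : (pca.append pab).bypass = pcb := (eq_tpath T'.isTree (Walk.bypass_isPath _))
  have hsubsup : ∀ z ∈ pcb.support, z ∈ pca.support ∨ z ∈ pab.support := by
    intro z hz
    rw [← heqb] at hz
    have hz2 := Walk.support_bypass_subset _ hz
    rw [Walk.support_append] at hz2
    rcases List.mem_append.1 hz2 with h | h
    · exact Or.inl h
    · exact Or.inr (List.mem_of_mem_tail h)
  have hv_ab : v ∈ pab.support := (hsubsup v hv_mem).resolve_left hv_nca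
  have r3 : T'.C a ∩ T'.C b ⊆ T'.C v := T'.rip a b pab (tpath_isPath _ _ _) v hv_ab
  have r4 : T'.C c ∩ T'.C b ⊆ T'.C v := T'.rip c b pcb (tpath_isPath _ _ _) v hv_mem
  rw [ha, hb, Finset.inter_comm] at r3
  rw [hc, hb, Finset.inter_comm] at r4
  have hsub2 : D.erase x2 ⊆ T'.C v := by
    rw [← erase_inter_union_erase h13]
    exact Finset.union_subset r3 r4
  have heq2 : D.erase x2 = T'.C v :=
    Finset.eq_of_subset_of_card_le hsub2 (by rw [hcard v, ← hb, hcard b])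
  have hvb : v = b := jtree_C_inj T' (heq2.symm.trans hb.symm)
  exact hvb ▸ hadj

end ForwardAux
section BackwardAux

open SimpleGraph

variable {V : Type} [Fintype V] [DecidableEq V] (T : JTree V)

/-- The set of separators attached to a given node. -/
def sepAt (i : T.ι) : Set (Finset V) := {s | ∃ j, T.G.Adj i j ∧ s = T.C i ∩ T.C j}

lemma sep_subset {s : Finset V} {i : T.ι} (h : s ∈ sepAt T i) : s ⊆ T.C i := by
  obtain ⟨j, _, rfl⟩ := h
  exact Finset.inter_subset_left

variable {k : ℕ}

lemma sep_card (hch : T.IsCherry k) {s : Finset V} {i : T.ι} (h : s ∈ sepAt T i) :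
    s.card = k - 1 := by
  obtain ⟨j, hj, rfl⟩ := h
  exact hch.2 i j hj

lemma mem_separators {s : Finset V} {i : T.ι} (h : s ∈ sepAt T i) : s ∈ T.separators := by
  obtain ⟨j, hj, rfl⟩ := h
  exact ⟨i, j, hj, rfl⟩

lemma separators_ex {s : Finset V} (h : s ∈ T.separators) : ∃ i, s ∈ sepAt T i := by
  obtain ⟨i, j, hj, rfl⟩ := h
  exact ⟨i, ⟨j, hj, rfl⟩⟩

/-- The node type of the separator tree. -/
abbrev SI := {s : Finset V // s ∈ T.separators}

/-- The separator graph: two distinct separators are adjacent if they are both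
separators at a common node. -/
def HG : SimpleGraph (SI T) where
  Adj a b := a ≠ b ∧ ∃ i, a.val ∈ sepAt T i ∧ b.val ∈ sepAt T i
  symm := ⟨by rintro a b ⟨hne, i, h1, h2⟩; exact ⟨hne.symm, i, h2, h1⟩⟩
  loopless := ⟨by rintro a ⟨hne, _⟩; exact hne rfl⟩

lemma no_three (hsep : ∀ i : T.ι, (sepAt T i).ncard ≤ 2) {i : T.ι} {s1 s2 s3 : Finset V}
    (h1 : s1 ∈ sepAt T i) (h2 : s2 ∈ sepAt T i) (h3 : s3 ∈ sepAt T i)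
    (h12 : s1 ≠ s2) (h13 : s1 ≠ s3) (h23 : s2 ≠ s3) : False := by
  have hgt := (Set.two_lt_ncard (Set.toFinite _)).2 ⟨s1, h1, s2, h2, s3, h3, h12, h13, h23⟩
  have hle := hsep i
  omega

lemma two_sep_card (hch : T.IsCherry k) (hk2 : 2 ≤ k) {i : T.ι} {s1 s2 : Finset V}
    (h1 : s1 ∈ sepAt T i) (h2 : s2 ∈ sepAt T i) (hne : s1 ≠ s2) :
    (s1 ∩ s2).card = k - 2 := by
  obtain ⟨x, hx, hs1⟩ := exists_erase_eq_of_card (sep_subset T h1)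
    (by rw [hch.1 i, sep_card T hch h1]; omega)
  obtain ⟨y, hy, hs2⟩ := exists_erase_eq_of_card (sep_subset T h2)
    (by rw [hch.1 i, sep_card T hch h2]; omega)
  have hxy : x ≠ y := by
    rintro rfl
    exact hne (hs1.trans hs2.symm)
  have hset : s1 ∩ s2 = T.C i \ {x, y} := by
    rw [hs1, hs2]
    ext t
    simp only [Finset.mem_inter, Finset.mem_erase, Finset.mem_sdiff, Finset.mem_insert,
      Finset.mem_singleton]
    tauto
  have hsub : ({x, y} : Finset V) ⊆ T.C i := by
    intro t ht
    rcases Finset.mem_insert.1 ht with rfl | ht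
    · exact hx
    · exact (Finset.mem_singleton.1 ht) ▸ hy
  rw [hset, Finset.card_sdiff_of_subset hsub, hch.1 i]
  rw [Finset.card_insert_of_notMem (by simp [hxy]), Finset.card_singleton]

lemma path_sep_eq (hch : T.IsCherry k) :
    ∀ {u v : T.ι} (p : T.G.Walk u v), p.IsPath → ∀ {A : Finset V}, A.card = k - 1 →
      A ⊆ T.C u → A ⊆ T.C v → ∀ e ∈ p.edges, T.sep e = A := by
  intro u v p
  induction p with
  | nil =>
    intro _ A _ _ _ e he
    simp [Walk.edges_nil] at he
  | @cons u x v h q ih =>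
    intro hp A hAcard hAu hAv e he
    have hAx : A ⊆ T.C x := by
      intro t ht
      refine T.rip u v (Walk.cons h q) hp x ?_ (Finset.mem_inter.2 ⟨hAu ht, hAv ht⟩)
      rw [Walk.support_cons]
      exact List.mem_cons_of_mem _ q.start_mem_support
    rw [Walk.edges_cons] at he
    rcases List.mem_cons.1 he with rfl | he
    · have hsub : A ⊆ T.C u ∩ T.C x := fun t ht => Finset.mem_inter.2 ⟨hAu ht, hAx ht⟩
      have heq : A = T.C u ∩ T.C x :=
        Finset.eq_of_subset_of_card_le hsub (by rw [hch.2 u x h, hAcard])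
      simp only [JTree.sep, Sym2.lift_mk]
      exact heq.symm
    · exact ih hp.of_cons hAcard hAx hAv e he

lemma block (hch : T.IsCherry k) (hsep : ∀ i : T.ι, (sepAt T i).ncard ≤ 2) :
    ∀ {A B : SI T} (q : (HG T).Walk A B), q.IsPath →
      ∀ Z : SI T, (∀ X ∈ q.support.take 2, Z ≠ X) →
      ∀ u : T.ι, Z.val ∈ sepAt T u → A.val ∈ sepAt T u →
      ∃ v : T.ι, B.val ∈ sepAt T v ∧ ∃ w : T.G.Walk u v, w.IsTrail ∧
        (∀ e ∈ w.edges, ∃ X : SI T, X ∈ q.support ∧ X ≠ B ∧ T.sep e = X.val) ∧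
        q.length ≤ w.length := by
  intro A B q
  induction q with
  | nil =>
    intro _ Z _ u _ hAu
    exact ⟨u, hAu, Walk.nil, by simp [Walk.isTrail_def], by simp, by simp⟩
  | @cons A A₂ B h' q' ih =>
    intro hq Z hZ u hZu hAu
    have h'' := h'
    obtain ⟨hne, i₁, hAi, hA2i⟩ := h''
    have hApath : A ∉ q'.support := ((Walk.cons_isPath_iff _ _).1 hq).2
    have hAB : A ≠ B := fun hfoo => hApath (hfoo ▸ q'.end_mem_support)
    have hui : u ≠ i₁ := by
      rintro rfl
      have hZA : Z ≠ A := by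
        refine hZ A ?_
        rw [Walk.support_cons]
        simp
      have hZA2 : Z ≠ A₂ := by
        refine hZ A₂ ?_
        rw [Walk.support_cons, q'.support_eq_cons]
        exact List.mem_cons_of_mem _ (List.mem_cons_self ..)
      exact no_three T hsep hZu hAu hA2i
        (fun h0 => hZA (Subtype.ext h0)) (fun h0 => hZA2 (Subtype.ext h0))
        (fun h0 => hne (Subtype.ext h0))
    have hblkpath := tpath_isPath T.isTree u i₁
    have hblk_edges : ∀ e ∈ (tpath T.isTree u i₁).edges, T.sep e = A.val :=
      path_sep_eq T hch _ hblkpath (sep_card T hch hAu) (sep_subset T hAu) (sep_subset T hAi)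
    obtain ⟨v, hBv, w', hw't, hw'cls, hw'len⟩ :=
      ih ((Walk.cons_isPath_iff _ _).1 hq).1 A
        (by intro X hX hax; exact hApath (hax ▸ List.take_subset _ _ hX)) i₁ hAi hA2i
    refine ⟨v, hBv, (tpath T.isTree u i₁).append w', ?_, ?_, ?_⟩
    · rw [Walk.isTrail_def, Walk.edges_append, List.nodup_append]
      refine ⟨hblkpath.isTrail.edges_nodup, hw't.edges_nodup, ?_⟩
      intro e he1 e' he2 rfl
      obtain ⟨X, hXsup, _, hXsep⟩ := hw'cls e he2
      have hXA : X ≠ A := fun hxa => hApath (hxa ▸ hXsup)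
      exact hXA (Subtype.ext (hXsep.symm.trans (hblk_edges e he1)))
    · intro e he
      rw [Walk.edges_append] at he
      rcases List.mem_append.1 he with he | he
      · exact ⟨A, by rw [Walk.support_cons]; simp, hAB, hblk_edges e he⟩
      · obtain ⟨X, hX1, hX2, hX3⟩ := hw'cls e he
        exact ⟨X, by rw [Walk.support_cons]; exact List.mem_cons_of_mem _ hX1, hX2, hX3⟩
    · rw [Walk.length_append, Walk.length_cons]
      have h1 : 1 ≤ (tpath T.isTree u i₁).length := by
        rcases Nat.eq_zero_or_pos (tpath T.isTree u i₁).length with h0 | h0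
        · exact absurd (Walk.eq_of_length_eq_zero h0) hui
        · exact h0
      omega

lemma HG_acyclic (hch : T.IsCherry k) (hsep : ∀ i : T.ι, (sepAt T i).ncard ≤ 2) :
    (HG T).IsAcyclic := by
  intro S c hc
  cases c with
  | nil => exact hc.ne_nil rfl
  | @cons _ S₁ _ h p =>
    have h'' := h
    obtain ⟨hne, u, hSu, hS1u⟩ := h''
    have hptrail : p.IsTrail := hc.isCircuit.isTrail.of_cons
    have hpnodup : p.support.Nodup := by
      have hh := hc.support_nodup
      rwa [Walk.support_cons, List.tail_cons] at hh
    have hp : p.IsPath := ⟨hptrail, hpnodup⟩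
    have hlen : 2 ≤ p.length := by
      have h3 := hc.three_le_length
      rw [Walk.length_cons] at h3
      omega
    cases p with
    | nil => simp at hlen
    | @cons _ S₂ _ h₁ p₁ =>
      cases p₁ with
      | nil => simp at hlen
      | @cons _ S₃ _ h₂ p₂ =>
        have htake : ∀ X ∈ (Walk.cons h₁ (Walk.cons h₂ p₂)).support.take 2, S ≠ X := by
          intro X hX
          rw [Walk.support_cons, Walk.support_cons] at hX
          have hXX : X ∈ [S₁, S₂] := hX
          have h5 : S₂ ∉ p₂.support :=
            ((Walk.cons_isPath_iff _ _).1 ((Walk.cons_isPath_iff _ _).1 hp).1).2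
          simp only [List.mem_cons, List.mem_singleton] at hXX
          rcases hXX with rfl | hXX
          · exact hne
          · rcases hXX with rfl | hXX
            · exact fun hSS => h5 (hSS ▸ p₂.end_mem_support)
            · simp at hXX
        obtain ⟨v, hSv, w, hwt, hwcls, hwlen⟩ :=
          block T hch hsep _ hp S htake u hSu hS1u
        have hfin_edges : ∀ e ∈ (tpath T.isTree v u).edges, T.sep e = S.val :=
          path_sep_eq T hch _ (tpath_isPath _ _ _) (sep_card T hch hSv) (sep_subset T hSv)
            (sep_subset T hSu)
        have htrail : (w.append (tpath T.isTree v u)).IsTrail := by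
          rw [Walk.isTrail_def, Walk.edges_append, List.nodup_append]
          refine ⟨hwt.edges_nodup, (tpath_isPath _ _ _).isTrail.edges_nodup, ?_⟩
          intro e he1 e' he2 rfl
          obtain ⟨X, _, hXne, hXsep⟩ := hwcls e he1
          exact hXne (Subtype.ext (hXsep.symm.trans (hfin_edges e he2)))
        have hnil := closed_trail_eq_nil T.isTree.2 _ htrail
        have hlen0 := congrArg Walk.length hnil
        rw [Walk.length_append] at hlen0
        simp only [Walk.length_nil] at hlen0
        rw [Walk.length_cons, Walk.length_cons] at hwlen
        omega

lemma HG_reach : ∀ {x y : T.ι} (w : T.G.Walk x y) {A B : SI T},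
    A.val ∈ sepAt T x → B.val ∈ sepAt T y → (HG T).Reachable A B := by
  intro x y w
  induction w with
  | nil =>
    intro A B hA hB
    rcases eq_or_ne A B with rfl | hne
    · exact Reachable.refl A
    · exact SimpleGraph.Adj.reachable ⟨hne, _, hA, hB⟩
  | @cons x x₂ y h q ih =>
    intro A B hA hB
    have hMsep : T.C x ∩ T.C x₂ ∈ T.separators := ⟨x, x₂, h, rfl⟩
    have hMx : (⟨T.C x ∩ T.C x₂, hMsep⟩ : SI T).val ∈ sepAt T x := ⟨x₂, h, rfl⟩
    have hMx₂ : (⟨T.C x ∩ T.C x₂, hMsep⟩ : SI T).val ∈ sepAt T x₂ :=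
      ⟨x, h.symm, Finset.inter_comm _ _⟩
    have r1 : (HG T).Reachable A ⟨T.C x ∩ T.C x₂, hMsep⟩ := by
      rcases eq_or_ne A (⟨T.C x ∩ T.C x₂, hMsep⟩ : SI T) with rfl | hne
      · exact Reachable.refl _
      · exact SimpleGraph.Adj.reachable ⟨hne, x, hA, hMx⟩
    exact r1.trans (ih hMx₂ hB)

lemma exists_separator (hcov : T.CoversAll) (hch : T.IsCherry k)
    (hk : k < Fintype.card V) : ∃ s : Finset V, s ∈ T.separators := by
  obtain ⟨i0⟩ := T.isTree.1.nonempty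
  obtain ⟨v, hv⟩ : ∃ v, v ∉ T.C i0 := by
    by_contra hno
    push_neg at hno
    have huniv : T.C i0 = Finset.univ := Finset.eq_univ_iff_forall.2 hno
    have hcard := hch.1 i0
    rw [huniv, Finset.card_univ] at hcard
    omega
  obtain ⟨i1, hi1⟩ := hcov v
  have hne : i0 ≠ i1 := fun h => hv (h ▸ hi1)
  obtain ⟨wk⟩ := T.isTree.1.preconnected i0 i1
  have hnn : ¬ wk.Nil := Walk.not_nil_of_ne hne
  obtain ⟨x, hadj, _, _⟩ := Walk.not_nil_iff.1 hnn
  exact ⟨T.C i0 ∩ T.C x, i0, x, hadj, rfl⟩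

lemma HG_connected (hcov : T.CoversAll) (hch : T.IsCherry k)
    (hk : k < Fintype.card V) : (HG T).Connected := by
  obtain ⟨s0, hs0⟩ := exists_separator T hcov hch hk
  haveI : Nonempty (SI T) := ⟨⟨s0, hs0⟩⟩
  have hpre : (HG T).Preconnected := by
    intro a b
    obtain ⟨ia, haa⟩ := separators_ex T a.2
    obtain ⟨ib, hbb⟩ := separators_ex T b.2
    obtain ⟨wk⟩ := T.isTree.1.preconnected ia ib
    exact HG_reach T wk haa hbb
  exact ⟨hpre⟩

/-- The subgraph of the separator graph on separators containing `t`. -/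
def HGv (t : V) : SimpleGraph (SI T) where
  Adj a b := (HG T).Adj a b ∧ t ∈ a.val ∧ t ∈ b.val
  symm := ⟨by rintro a b ⟨h1, h2, h3⟩; exact ⟨h1.symm, h3, h2⟩⟩
  loopless := ⟨by rintro a ⟨h1, _⟩; exact (HG T).loopless.irrefl a h1⟩

lemma HGv_le (t : V) : HGv T t ≤ HG T := fun _ _ h => h.1

lemma HGv_reach {t : V} : ∀ {x y : T.ι} (w : T.G.Walk x y),
    (∀ z ∈ w.support, t ∈ T.C z) →
    ∀ {A B : SI T}, A.val ∈ sepAt T x → t ∈ A.val → B.val ∈ sepAt T y → t ∈ B.val →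
    (HGv T t).Reachable A B := by
  intro x y w
  induction w with
  | nil =>
    intro _ A B hA htA hB htB
    rcases eq_or_ne A B with rfl | hne
    · exact Reachable.refl A
    · exact SimpleGraph.Adj.reachable ⟨⟨hne, _, hA, hB⟩, htA, htB⟩
  | @cons x x₂ y h q ih =>
    intro hsup A B hA htA hB htB
    have hMsep : T.C x ∩ T.C x₂ ∈ T.separators := ⟨x, x₂, h, rfl⟩
    have htM : t ∈ T.C x ∩ T.C x₂ := by
      refine Finset.mem_inter.2 ⟨hsup x ?_, hsup x₂ ?_⟩
      · rw [Walk.support_cons]; simp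
      · rw [Walk.support_cons]; exact List.mem_cons_of_mem _ q.start_mem_support
    have hMx : (⟨T.C x ∩ T.C x₂, hMsep⟩ : SI T).val ∈ sepAt T x := ⟨x₂, h, rfl⟩
    have hMx₂ : (⟨T.C x ∩ T.C x₂, hMsep⟩ : SI T).val ∈ sepAt T x₂ :=
      ⟨x, h.symm, Finset.inter_comm _ _⟩
    have r1 : (HGv T t).Reachable A ⟨T.C x ∩ T.C x₂, hMsep⟩ := by
      rcases eq_or_ne A (⟨T.C x ∩ T.C x₂, hMsep⟩ : SI T) with rfl | hne
      · exact Reachable.refl _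
      · exact SimpleGraph.Adj.reachable ⟨⟨hne, x, hA, hMx⟩, htA, htM⟩
    have hsup' : ∀ z ∈ q.support, t ∈ T.C z := fun z hz => by
      refine hsup z ?_
      rw [Walk.support_cons]
      exact List.mem_cons_of_mem _ hz
    exact r1.trans (ih hsup' hMx₂ htM hB htB)

lemma HGv_walk_support {t : V} : ∀ {a b : SI T} (w : (HGv T t).Walk a b), t ∈ b.val →
    ∀ z ∈ w.support, t ∈ z.val := by
  intro a b w
  induction w with
  | nil =>
    intro ht z hz
    rw [Walk.support_nil, List.mem_singleton] at hz
    exact hz ▸ ht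
  | @cons a a₂ b h q ih =>
    intro ht z hz
    rw [Walk.support_cons] at hz
    rcases List.mem_cons.1 hz with rfl | hz
    · exact h.2.1
    · exact ih ht z hz

lemma HG_rip (htree : (HG T).IsTree) {a b : SI T} (p : (HG T).Walk a b) (hp : p.IsPath) :
    ∀ X ∈ p.support, a.val ∩ b.val ⊆ X.val := by
  intro X hX t ht
  rw [Finset.mem_inter] at ht
  obtain ⟨ia, ha⟩ := separators_ex T a.2
  obtain ⟨ib, hb⟩ := separators_ex T b.2
  have hta : t ∈ T.C ia := sep_subset T ha ht.1
  have htb : t ∈ T.C ib := sep_subset T hb ht.2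
  have hsup : ∀ z ∈ (tpath T.isTree ia ib).support, t ∈ T.C z := fun z hz =>
    T.rip ia ib _ (tpath_isPath _ _ _) z hz (Finset.mem_inter.2 ⟨hta, htb⟩)
  obtain ⟨wv⟩ := HGv_reach T _ hsup ha ht.1 hb ht.2
  have hsupv := HGv_walk_support T wv ht.2
  have hedges : ∀ e ∈ wv.edges, e ∈ (HG T).edgeSet := fun e he =>
    SimpleGraph.edgeSet_mono (HGv_le T t) (wv.edges_subset_edgeSet he)
  have hpeq : p = (wv.transfer (HG T) hedges).bypass :=
    (htree.existsUnique_path a b).unique hp (Walk.bypass_isPath _)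
  have hXm : X ∈ (wv.transfer (HG T) hedges).support :=
    Walk.support_bypass_subset _ (hpeq ▸ hX)
  rw [Walk.support_transfer] at hXm
  exact hsupv X hXm

end BackwardAux

/-- For a `k`-order cherry tree `T` on `V` (`2 ≤ k ≤ |V| - 1`), the
separators of `T` form a `(k-1)`-order cherry tree iff every cluster of `T` is
connected to its neighbors by at most two different separators. -/
theorem sep_cherry_iff_at_most_two_separators
    {V : Type} [Fintype V] [DecidableEq V] (d k : ℕ)
    (hd : Fintype.card V = d) (hk2 : 2 ≤ k) (hkd : k ≤ d - 1)
    (T : JTree V) (hcov : T.CoversAll) (hch : T.IsCherry k) :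
    T.SeparatorsFormCherry k ↔
      ∀ i : T.ι, ({s : Finset V | ∃ j, T.G.Adj i j ∧ s = T.C i ∩ T.C j}).ncard ≤ 2 := by
  classical
  constructor
  · rintro ⟨T', hch', hrange⟩ i
    by_contra hgt
    push_neg at hgt
    obtain ⟨S1, hS1, S2, hS2, S3, hS3, h12, h13, h23⟩ :=
      (Set.two_lt_ncard (Set.toFinite _)).1 hgt
    obtain ⟨j1, hj1, hS1e⟩ := hS1
    obtain ⟨j2, hj2, hS2e⟩ := hS2
    obtain ⟨j3, hj3, hS3e⟩ := hS3
    have hS1sub : S1 ⊆ T.C i := hS1e ▸ Finset.inter_subset_left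
    have hS2sub : S2 ⊆ T.C i := hS2e ▸ Finset.inter_subset_left
    have hS3sub : S3 ⊆ T.C i := hS3e ▸ Finset.inter_subset_left
    have hS1card : S1.card = k - 1 := hS1e ▸ hch.2 i j1 hj1
    have hS2card : S2.card = k - 1 := hS2e ▸ hch.2 i j2 hj2
    have hS3card : S3.card = k - 1 := hS3e ▸ hch.2 i j3 hj3
    obtain ⟨x1, hx1, hS1x⟩ := exists_erase_eq_of_card hS1sub (by rw [hch.1 i, hS1card]; omega)
    obtain ⟨x2, hx2, hS2x⟩ := exists_erase_eq_of_card hS2sub (by rw [hch.1 i, hS2card]; omega)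
    obtain ⟨x3, hx3, hS3x⟩ := exists_erase_eq_of_card hS3sub (by rw [hch.1 i, hS3card]; omega)
    have h12' : x1 ≠ x2 := by rintro rfl; exact h12 (hS1x.trans hS2x.symm)
    have h13' : x1 ≠ x3 := by rintro rfl; exact h13 (hS1x.trans hS3x.symm)
    have h23' : x2 ≠ x3 := by rintro rfl; exact h23 (hS2x.trans hS3x.symm)
    obtain ⟨a, haC⟩ : S1 ∈ Set.range T'.C := by rw [hrange]; exact ⟨i, j1, hj1, hS1e⟩
    obtain ⟨b, hbC⟩ : S2 ∈ Set.range T'.C := by rw [hrange]; exact ⟨i, j2, hj2, hS2e⟩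
    obtain ⟨c, hcC⟩ : S3 ∈ Set.range T'.C := by rw [hrange]; exact ⟨i, j3, hj3, hS3e⟩
    have hcb := adj_of_sep3 T' hch'.1 hx2 hx3 h12' h13' h23'
      (haC.trans hS1x) (hbC.trans hS2x) (hcC.trans hS3x)
    have hac := adj_of_sep3 T' hch'.1 hx3 hx1 h23' (Ne.symm h12') (Ne.symm h13')
      (hbC.trans hS2x) (hcC.trans hS3x) (haC.trans hS1x)
    have hba := adj_of_sep3 T' hch'.1 hx1 hx2 (Ne.symm h13') (Ne.symm h23') h12'
      (hcC.trans hS3x) (haC.trans hS1x) (hbC.trans hS2x)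
    have hab : a ≠ b := hba.ne'
    have hbc : b ≠ c := hcb.ne'
    have hca : c ≠ a := hac.ne'
    refine T'.isTree.2
      (SimpleGraph.Walk.cons hcb (SimpleGraph.Walk.cons hba
        (SimpleGraph.Walk.cons hac SimpleGraph.Walk.nil))) ⟨⟨?_, by simp⟩, ?_⟩
    · rw [SimpleGraph.Walk.isTrail_def]
      have e12 : s(c, b) ≠ s(b, a) := fun h0 => by
        rcases Sym2.eq_iff.1 h0 with ⟨h0a, h0b⟩ | ⟨h0a, h0b⟩
        · exact hbc h0a.symm
        · exact hca h0a
      have e13 : s(c, b) ≠ s(a, c) := fun h0 => by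
        rcases Sym2.eq_iff.1 h0 with ⟨h0a, h0b⟩ | ⟨h0a, h0b⟩
        · exact hca h0a
        · exact hab h0b.symm
      have e23 : s(b, a) ≠ s(a, c) := fun h0 => by
        rcases Sym2.eq_iff.1 h0 with ⟨h0a, h0b⟩ | ⟨h0a, h0b⟩
        · exact hab h0a.symm
        · exact hbc h0a
      simp [SimpleGraph.Walk.edges_cons, List.nodup_cons, e12, e13, e23]
    · have hba' : b ≠ a := hab.symm
      have hcb' : c ≠ b := hbc.symm
      have hac' : a ≠ c := hca.symm
      simp [SimpleGraph.Walk.support_cons, List.nodup_cons, hab, hbc, hca, hba', hcb', hac']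
  · intro hsep
    have hkV : k < Fintype.card V := by rw [hd]; omega
    haveI : Fintype (SI T) := Fintype.ofFinite _
    have htree : (HG T).IsTree := ⟨HG_connected T hcov hch hkV, HG_acyclic T hch hsep⟩
    refine ⟨{ ι := SI T, G := HG T, isTree := htree, C := Subtype.val,
              noSub := ?_, rip := fun a b p hp X hX => HG_rip T htree p hp X hX }, ⟨?_, ?_⟩, ?_⟩
    · intro a b hne hsub
      obtain ⟨ia, ha⟩ := separators_ex T a.2
      obtain ⟨ib, hb⟩ := separators_ex T b.2
      have h1 := sep_card T hch ha
      have h2 := sep_card T hch hb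
      have hval : a.val = b.val := Finset.eq_of_subset_of_card_le hsub (by omega)
      exact hne (Subtype.ext hval)
    · intro s
      obtain ⟨is, hs⟩ := separators_ex T s.2
      exact sep_card T hch hs
    · intro a b hadj
      obtain ⟨hne, i, h1, h2⟩ := hadj
      have hc2 := two_sep_card T hch hk2 h1 h2 (fun h0 => hne (Subtype.ext h0))
      rw [hc2]
      omega
    · ext s
      constructor
      · rintro ⟨a, rfl⟩
        exact a.2
      · intro hs
        exact ⟨⟨s, hs⟩, rfl⟩
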